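/- Let 𝒜 ∈ Sp(2d,ℝ) be shift-invertible and set G_𝒜 := L·E_𝒜^{−1}·ℰ_𝒜. Then 𝒜 admits the factorization 𝒜 = 𝒟_{E_𝒜^{−1}} · V_{M_𝒜} · V_Lᵀ · Lift(G_𝒜), a product of four symplectic matrices. -/
import Mathlib


open Matrix

/-- Index type for `2d × 2d` matrices, viewed as two `d`-blocks. -/
abbrev I2 (d : ℕ) := Fin d ⊕ Fin d

/-- Index type for `4d × 4d` matrices, viewed as four `d`-blocks. -/
abbrev I4 (d : ℕ) := I2 d ⊕ I2 d

/-- The standard symplectic matrix `J = [[0, I], [-I, 0]]`. -/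
def symplJ (α : Type*) [Fintype α] [DecidableEq α] : Matrix (α ⊕ α) (α ⊕ α) ℝ :=
  fromBlocks 0 1 (-1) 0

/-- `A` is symplectic if `Aᵀ J A = J`. -/
def IsSymplectic {α : Type*} [Fintype α] [DecidableEq α]
    (A : Matrix (α ⊕ α) (α ⊕ α) ℝ) : Prop :=
  Aᵀ * symplJ α * A = symplJ α

/-- Embedding of the "odd" block columns (blocks 1 and 3) of a `4d×4d` matrix. -/
def colOdd (d : ℕ) : I2 d → I4 d :=
  Sum.elim (fun i => Sum.inl (Sum.inl i)) (fun i => Sum.inr (Sum.inl i))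

/-- Embedding of the "even" block columns (blocks 2 and 4) of a `4d×4d` matrix. -/
def colEven (d : ℕ) : I2 d → I4 d :=
  Sum.elim (fun i => Sum.inl (Sum.inr i)) (fun i => Sum.inr (Sum.inr i))

/-- `E_𝒜 = [[A₁₁, A₁₃], [A₂₁, A₂₃]]`. -/
def subE {d : ℕ} (A : Matrix (I4 d) (I4 d) ℝ) : Matrix (I2 d) (I2 d) ℝ :=
  A.submatrix Sum.inl (colOdd d)

/-- `ℰ_𝒜 = [[A₁₂, A₁₄], [A₂₂, A₂₄]]`. -/
def subEE {d : ℕ} (A : Matrix (I4 d) (I4 d) ℝ) : Matrix (I2 d) (I2 d) ℝ :=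
  A.submatrix Sum.inl (colEven d)

/-- `F_𝒜 = [[A₃₁, A₃₃], [A₄₁, A₄₃]]`. -/
def subF {d : ℕ} (A : Matrix (I4 d) (I4 d) ℝ) : Matrix (I2 d) (I2 d) ℝ :=
  A.submatrix Sum.inr (colOdd d)

/-- `ℱ_𝒜 = [[A₃₂, A₃₄], [A₄₂, A₄₄]]`. -/
def subFF {d : ℕ} (A : Matrix (I4 d) (I4 d) ℝ) : Matrix (I2 d) (I2 d) ℝ :=
  A.submatrix Sum.inr (colEven d)

/-- Row/column embedding of the `i`-th `d`-block (i = 1,2,3,4). -/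
def r1 (d : ℕ) : Fin d → I4 d := fun i => Sum.inl (Sum.inl i)
def r2 (d : ℕ) : Fin d → I4 d := fun i => Sum.inl (Sum.inr i)
def r3 (d : ℕ) : Fin d → I4 d := fun i => Sum.inr (Sum.inl i)
def r4 (d : ℕ) : Fin d → I4 d := fun i => Sum.inr (Sum.inr i)

/-- The `d×d` block `A_{ij}` of a `4d×4d` matrix, given the row and column embeddings. -/
def blk {d : ℕ} (A : Matrix (I4 d) (I4 d) ℝ) (ri cj : Fin d → I4 d) :
    Matrix (Fin d) (Fin d) ℝ :=
  A.submatrix ri cj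

/-- The symmetric matrix `M_𝒜` associated with a symplectic `4d×4d` matrix `𝒜`. -/
def Mmat {d : ℕ} (A : Matrix (I4 d) (I4 d) ℝ) : Matrix (I2 d) (I2 d) ℝ :=
  fromBlocks
    ((blk A (r1 d) (r1 d))ᵀ * blk A (r3 d) (r1 d) + (blk A (r2 d) (r1 d))ᵀ * blk A (r4 d) (r1 d))
    ((blk A (r3 d) (r1 d))ᵀ * blk A (r1 d) (r3 d) + (blk A (r4 d) (r1 d))ᵀ * blk A (r2 d) (r3 d))
    ((blk A (r1 d) (r3 d))ᵀ * blk A (r3 d) (r1 d) + (blk A (r2 d) (r3 d))ᵀ * blk A (r4 d) (r1 d))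
    ((blk A (r1 d) (r3 d))ᵀ * blk A (r3 d) (r3 d) + (blk A (r2 d) (r3 d))ᵀ * blk A (r4 d) (r3 d))

/-- `𝒟_E = [[E⁻¹, 0], [0, Eᵀ]]`. -/
noncomputable def Dmat {α : Type*} [Fintype α] [DecidableEq α] (E : Matrix α α ℝ) :
    Matrix (α ⊕ α) (α ⊕ α) ℝ :=
  fromBlocks E⁻¹ 0 0 Eᵀ

/-- `V_C = [[I, 0], [C, I]]`. -/
def Vmat {α : Type*} [Fintype α] [DecidableEq α] (C : Matrix α α ℝ) :
    Matrix (α ⊕ α) (α ⊕ α) ℝ :=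
  fromBlocks 1 0 C 1

/-- `L = [[0, I], [I, 0]]` (`2d × 2d`). -/
def Lmat (d : ℕ) : Matrix (I2 d) (I2 d) ℝ :=
  fromBlocks 0 1 1 0

/-- `Lift(G)`: the `4d×4d` matrix with block rows `[I,0,0,0]`, `[0,G₁₁,0,G₁₂]`,
`[0,0,I,0]`, `[0,G₂₁,0,G₂₂]`. -/
def Lift {d : ℕ} (G : Matrix (I2 d) (I2 d) ℝ) : Matrix (I4 d) (I4 d) ℝ :=
  fromBlocks
    (fromBlocks 1 0 0 (G.submatrix Sum.inl Sum.inl))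
    (fromBlocks 0 0 0 (G.submatrix Sum.inl Sum.inr))
    (fromBlocks 0 0 0 (G.submatrix Sum.inr Sum.inl))
    (fromBlocks 1 0 0 (G.submatrix Sum.inr Sum.inr))

/-! ### Auxiliary material for the proof -/

namespace SIF

/-! #### Abstract (noncommutative ring) computations -/

section abstract
variable {R : Type*} [Ring R]
variable {E Ei ET ETi F FT EE FF EET FFT L P N K Q J G M : R}

lemma hELG (hEEi : E * Ei = 1) (hLL : L * L = 1) (hG : G = L * Ei * EE) :
    E * L * G = EE := by
  rw [hG]
  calc E * L * (L * Ei * EE) = E * (L * L) * (Ei * EE) := by noncomm_ring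
    _ = E * Ei * EE := by rw [hLL, mul_one, ← mul_assoc]
    _ = EE := by rw [hEEi, one_mul]

lemma hETiJ (hETi : ETi * ET = 1) (hR1 : ET * F - FT * E = J) :
    ETi * (-J) = ETi * FT * E - F := by
  rw [← hR1]
  calc ETi * -(ET * F - FT * E) = ETi * FT * E - (ETi * ET) * F := by noncomm_ring
    _ = ETi * FT * E - F := by rw [hETi, one_mul]

lemma hCore' (hEEi : E * Ei = 1) (hETi : ETi * ET = 1) (hLL : L * L = 1)
    (hPL : P * L = N) (hQL : Q * L = K) (hJ : J = N - K)
    (hG : G = L * Ei * EE) (hR1 : ET * F - FT * E = J) (hR2 : ET * FF = FT * EE) :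
    (F * L + ETi * (Q - P)) * G = FF := by
  have h1 : ETi * (Q - P) * G = ETi * (-J) * (Ei * EE) := by
    rw [hG, hJ]
    calc ETi * (Q - P) * (L * Ei * EE) = ETi * ((Q * L - P * L) * (Ei * EE)) := by noncomm_ring
      _ = ETi * ((K - N) * (Ei * EE)) := by rw [hPL, hQL]
      _ = ETi * -(N - K) * (Ei * EE) := by noncomm_ring
  have h3 : ETi * (Q - P) * G = ETi * (FT * EE) - F * (Ei * EE) := by
    rw [h1, hETiJ hETi hR1]
    calc (ETi * FT * E - F) * (Ei * EE)
        = ETi * (FT * (E * Ei * EE)) - F * (Ei * EE) := by noncomm_ring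
      _ = _ := by rw [hEEi, one_mul]
  have h4 : F * L * G = F * (Ei * EE) := by
    rw [hG]
    calc F * L * (L * Ei * EE) = F * (L * L) * (Ei * EE) := by noncomm_ring
      _ = F * (Ei * EE) := by rw [hLL, mul_one]
  calc (F * L + ETi * (Q - P)) * G = F * L * G + ETi * (Q - P) * G := by noncomm_ring
    _ = F * (Ei * EE) + (ETi * (FT * EE) - F * (Ei * EE)) := by rw [h3, h4]
    _ = ETi * (ET * FF) := by rw [← hR2]; noncomm_ring
    _ = FF := by rw [← mul_assoc, hETi, one_mul]

lemma hT1 (hEEi : E * Ei = 1) (hLL : L * L = 1) (hLQ : L * Q = N) (hKN : K + N = L)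
    (hG : G = L * Ei * EE) :
    E * (P + K * G * N) + (E * L) * (Q * G * N) = E * P + EE * N := by
  have h := hELG hEEi hLL hG
  calc E * (P + K * G * N) + (E * L) * (Q * G * N)
      = E * P + (E * K + E * (L * Q)) * (G * N) := by noncomm_ring
    _ = E * P + (E * (K + N)) * (G * N) := by rw [hLQ]; noncomm_ring
    _ = E * P + (E * L * G) * N := by rw [hKN]; noncomm_ring
    _ = E * P + EE * N := by rw [h]

lemma hT2 (hEEi : E * Ei = 1) (hLL : L * L = 1) (hLQ : L * Q = N) (hLP : L * P = K)
    (hKN : K + N = L) (hG : G = L * Ei * EE) :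
    E * (K * G * Q) + (E * L) * (P + Q * G * Q) = E * K + EE * Q := by
  have h := hELG hEEi hLL hG
  calc E * (K * G * Q) + (E * L) * (P + Q * G * Q)
      = E * (L * P) + (E * K + E * (L * Q)) * (G * Q) := by noncomm_ring
    _ = E * K + (E * (K + N)) * (G * Q) := by rw [hLQ, hLP]; noncomm_ring
    _ = E * K + (E * L * G) * Q := by rw [hKN]; noncomm_ring
    _ = E * K + EE * Q := by rw [h]

lemma hWdef (hETi : ETi * ET = 1) (hM : M = ET * F - N) :
    ETi * M = F - ETi * N := by
  rw [hM]
  calc ETi * (ET * F - N) = (ETi * ET) * F - ETi * N := by noncomm_ring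
    _ = F - ETi * N := by rw [hETi, one_mul]

lemma hT3 (hEEi : E * Ei = 1) (hETi : ETi * ET = 1) (hLL : L * L = 1)
    (hLQ : L * Q = N) (hPL : P * L = N) (hQL : Q * L = K)
    (hNK : N * K = P) (hNP : N * P = 0) (hNN : N * N = 0) (hKN : K + N = L)
    (hJ : J = N - K) (hG : G = L * Ei * EE) (hM : M = ET * F - N)
    (hR1 : ET * F - FT * E = J) (hR2 : ET * FF = FT * EE) :
    (ETi * M) * (P + K * G * N) + (ETi * M * L + ETi) * (Q * G * N) = F * P + FF * N := by
  have hW := hWdef hETi hM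
  have hcoeff : (ETi * M) * K + ((ETi * M) * L + ETi) * Q = F * L + ETi * (Q - P) := by
    rw [hW]
    calc (F - ETi * N) * K + ((F - ETi * N) * L + ETi) * Q
        = F * K - ETi * (N * K) + F * (L * Q) - ETi * (N * (L * Q)) + ETi * Q := by
          noncomm_ring
      _ = F * K - ETi * P + F * N - ETi * (N * N) + ETi * Q := by rw [hLQ, hNK]
      _ = F * (K + N) + ETi * (Q - P) := by rw [hNN]; noncomm_ring
      _ = F * L + ETi * (Q - P) := by rw [hKN]
  have hWP : (ETi * M) * P = F * P := by
    rw [hW]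
    calc (F - ETi * N) * P = F * P - ETi * (N * P) := by noncomm_ring
      _ = F * P := by rw [hNP]; noncomm_ring
  calc (ETi * M) * (P + K * G * N) + (ETi * M * L + ETi) * (Q * G * N)
      = (ETi * M) * P + ((ETi * M) * K + ((ETi * M) * L + ETi) * Q) * (G * N) := by
        noncomm_ring
    _ = F * P + ((F * L + ETi * (Q - P)) * G) * N := by rw [hcoeff, hWP]; noncomm_ring
    _ = F * P + FF * N := by rw [hCore' hEEi hETi hLL hPL hQL hJ hG hR1 hR2]

lemma hT4 (hEEi : E * Ei = 1) (hETi : ETi * ET = 1) (hLL : L * L = 1)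
    (hLQ : L * Q = N) (hLP : L * P = K) (hPL : P * L = N) (hQL : Q * L = K)
    (hNK : N * K = P) (hNN : N * N = 0) (hKN : K + N = L)
    (hJ : J = N - K) (hG : G = L * Ei * EE) (hM : M = ET * F - N)
    (hR1 : ET * F - FT * E = J) (hR2 : ET * FF = FT * EE) :
    (ETi * M) * (K * G * Q) + (ETi * M * L + ETi) * (P + Q * G * Q) = F * K + FF * Q := by
  have hW := hWdef hETi hM
  have hcoeff : (ETi * M) * K + ((ETi * M) * L + ETi) * Q = F * L + ETi * (Q - P) := by
    rw [hW]
    calc (F - ETi * N) * K + ((F - ETi * N) * L + ETi) * Q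
        = F * K - ETi * (N * K) + F * (L * Q) - ETi * (N * (L * Q)) + ETi * Q := by
          noncomm_ring
      _ = F * K - ETi * P + F * N - ETi * (N * N) + ETi * Q := by rw [hLQ, hNK]
      _ = F * (K + N) + ETi * (Q - P) := by rw [hNN]; noncomm_ring
      _ = F * L + ETi * (Q - P) := by rw [hKN]
  have hZP : (ETi * M * L + ETi) * P = F * K := by
    rw [hW]
    calc ((F - ETi * N) * L + ETi) * P
        = F * (L * P) - ETi * (N * (L * P)) + ETi * P := by noncomm_ring
      _ = F * K - ETi * (N * K) + ETi * P := by rw [hLP]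
      _ = F * K := by rw [hNK]; noncomm_ring
  calc (ETi * M) * (K * G * Q) + (ETi * M * L + ETi) * (P + Q * G * Q)
      = (ETi * M * L + ETi) * P
        + ((ETi * M) * K + ((ETi * M) * L + ETi) * Q) * (G * Q) := by noncomm_ring
    _ = F * K + ((F * L + ETi * (Q - P)) * G) * Q := by rw [hcoeff, hZP]; noncomm_ring
    _ = F * K + FF * Q := by rw [hCore' hEEi hETi hLL hPL hQL hJ hG hR1 hR2]

lemma hT6 (hEEi : E * Ei = 1) (hETi : ETi * ET = 1)
    (hLN : L * N = Q) (hLK : L * K = P) (hPL : P * L = N) (hQL : Q * L = K)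
    (hJ : J = N - K) (hG : G = L * Ei * EE)
    (hR1 : ET * F - FT * E = J) (hR2 : ET * FF = FT * EE)
    (hR2' : EET * F = FFT * E) (hR3 : EET * FF - FFT * EE = J) :
    EET * ETi * L * J * G = J := by
  have hLJL : L * J * L = -J := by
    rw [hJ]
    calc L * (N - K) * L = (L * N) * L - (L * K) * L := by noncomm_ring
      _ = K - N := by rw [hLN, hLK, hPL, hQL]
      _ = -(N - K) := by noncomm_ring
  have h5 : EET * ETi * L * J * G = EET * (ETi * (-J)) * (Ei * EE) := by
    rw [hG]
    calc EET * ETi * L * J * (L * Ei * EE)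
        = EET * ETi * ((L * J * L) * (Ei * EE)) := by noncomm_ring
      _ = EET * ETi * (-J * (Ei * EE)) := by rw [hLJL]
      _ = _ := by noncomm_ring
  rw [h5, hETiJ hETi hR1]
  calc EET * (ETi * FT * E - F) * (Ei * EE)
      = EET * (ETi * (FT * (E * Ei * EE))) - (EET * F) * (Ei * EE) := by noncomm_ring
    _ = EET * (ETi * (FT * EE)) - (FFT * E) * (Ei * EE) := by rw [hEEi, one_mul, hR2']
    _ = EET * ((ETi * ET) * FF) - FFT * (E * Ei * EE) := by rw [← hR2]; noncomm_ring
    _ = EET * FF - FFT * EE := by rw [hETi, one_mul, hEEi, one_mul]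
    _ = J := hR3

end abstract

/-! #### Structural `2d × 2d` matrices -/

variable {d : ℕ}

def Pm (d : ℕ) : Matrix (I2 d) (I2 d) ℝ := fromBlocks 1 0 0 0
def Nm (d : ℕ) : Matrix (I2 d) (I2 d) ℝ := fromBlocks 0 1 0 0
def Km (d : ℕ) : Matrix (I2 d) (I2 d) ℝ := fromBlocks 0 0 1 0
def Qm (d : ℕ) : Matrix (I2 d) (I2 d) ℝ := fromBlocks 0 0 0 1

lemma hLL : Lmat d * Lmat d = 1 := by
  simp [Lmat, fromBlocks_multiply, ← fromBlocks_one]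
lemma hLP : Lmat d * Pm d = Km d := by
  simp [Lmat, Pm, Km, fromBlocks_multiply]
lemma hLQ : Lmat d * Qm d = Nm d := by
  simp [Lmat, Qm, Nm, fromBlocks_multiply]
lemma hLN : Lmat d * Nm d = Qm d := by
  simp [Lmat, Qm, Nm, fromBlocks_multiply]
lemma hLK : Lmat d * Km d = Pm d := by
  simp [Lmat, Pm, Km, fromBlocks_multiply]
lemma hPL : Pm d * Lmat d = Nm d := by
  simp [Lmat, Pm, Nm, fromBlocks_multiply]
lemma hQL : Qm d * Lmat d = Km d := by
  simp [Lmat, Qm, Km, fromBlocks_multiply]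
lemma hNK : Nm d * Km d = Pm d := by
  simp [Nm, Km, Pm, fromBlocks_multiply]
lemma hNP : Nm d * Pm d = 0 := by
  simp [Nm, Pm, fromBlocks_multiply, ← fromBlocks_zero]
lemma hNN : Nm d * Nm d = 0 := by
  simp [Nm, fromBlocks_multiply, ← fromBlocks_zero]
lemma hKN : Km d + Nm d = Lmat d := by
  simp [Km, Nm, Lmat, fromBlocks_add]
lemma hJNK : symplJ (Fin d) = Nm d - Km d := by
  rw [symplJ, Nm, Km, sub_eq_add_neg, fromBlocks_neg, fromBlocks_add]
  norm_num
lemma hLT : (Lmat d)ᵀ = Lmat d := by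
  simp [Lmat, fromBlocks_transpose]
lemma hNT : (Nm d)ᵀ = Km d := by
  simp [Nm, Km, fromBlocks_transpose]

lemma fb_sub {n m o p : Type*} (A : Matrix n m ℝ) (B : Matrix n p ℝ) (C : Matrix o m ℝ)
    (D : Matrix o p ℝ) (A' : Matrix n m ℝ) (B' : Matrix n p ℝ) (C' : Matrix o m ℝ)
    (D' : Matrix o p ℝ) :
    fromBlocks A B C D - fromBlocks A' B' C' D'
      = fromBlocks (A - A') (B - B') (C - C') (D - D') := by
  rw [sub_eq_add_neg, fromBlocks_neg, fromBlocks_add]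
  simp [sub_eq_add_neg]

/-! #### The interleaving permutation and the symplectic relations -/

def eqv (d : ℕ) : I4 d ≃ I4 d where
  toFun := Sum.elim (colOdd d) (colEven d)
  invFun := Sum.elim (colOdd d) (colEven d)
  left_inv := by rintro ((i|i)|(i|i)) <;> rfl
  right_inv := by rintro ((i|i)|(i|i)) <;> rfl

lemma Bform (𝒜 : Matrix (I4 d) (I4 d) ℝ) :
    𝒜.submatrix id ⇑(eqv d) = fromBlocks (subE 𝒜) (subEE 𝒜) (subF 𝒜) (subFF 𝒜) := by
  ext (a|a) (b|b) <;> rfl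

lemma Jform : (symplJ (I2 d)).submatrix (eqv d) (eqv d)
    = fromBlocks (symplJ (Fin d)) 0 0 (symplJ (Fin d)) := by
  ext ((i|i)|(i|i)) ((j|j)|(j|j)) <;>
    simp [symplJ, eqv, colOdd, colEven, fromBlocks, one_apply]

lemma Brel (𝒜 : Matrix (I4 d) (I4 d) ℝ) (h𝒜 : IsSymplectic 𝒜) :
    (fromBlocks (subE 𝒜) (subEE 𝒜) (subF 𝒜) (subFF 𝒜))ᵀ * symplJ (I2 d) *
      fromBlocks (subE 𝒜) (subEE 𝒜) (subF 𝒜) (subFF 𝒜)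
    = fromBlocks (symplJ (Fin d)) 0 0 (symplJ (Fin d)) := by
  rw [← Bform, ← Jform, transpose_submatrix]
  have h1 : (symplJ (I2 d)) * 𝒜.submatrix id ⇑(eqv d)
      = ((symplJ (I2 d)) * 𝒜).submatrix id ⇑(eqv d) := by
    have := submatrix_mul_equiv (symplJ (I2 d)) 𝒜 id (Equiv.refl (I4 d)) ⇑(eqv d)
    simpa using this
  rw [mul_assoc, h1]
  have h2 : 𝒜ᵀ.submatrix ⇑(eqv d) id * ((symplJ (I2 d)) * 𝒜).submatrix id ⇑(eqv d)
      = (𝒜ᵀ * ((symplJ (I2 d)) * 𝒜)).submatrix ⇑(eqv d) ⇑(eqv d) := by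
    have := submatrix_mul_equiv 𝒜ᵀ ((symplJ (I2 d)) * 𝒜) ⇑(eqv d) (Equiv.refl (I4 d)) ⇑(eqv d)
    simpa using this
  rw [h2, ← mul_assoc, h𝒜]

lemma rels (𝒜 : Matrix (I4 d) (I4 d) ℝ) (h𝒜 : IsSymplectic 𝒜) :
    ((subE 𝒜)ᵀ * subF 𝒜 - (subF 𝒜)ᵀ * subE 𝒜 = symplJ (Fin d)) ∧
    ((subE 𝒜)ᵀ * subFF 𝒜 = (subF 𝒜)ᵀ * subEE 𝒜) ∧
    ((subEE 𝒜)ᵀ * subFF 𝒜 - (subFF 𝒜)ᵀ * subEE 𝒜 = symplJ (Fin d)) := by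
  have h := Brel 𝒜 h𝒜
  rw [fromBlocks_transpose, symplJ, fromBlocks_multiply, fromBlocks_multiply,
    fromBlocks_inj] at h
  obtain ⟨h11, h12, h21, h22⟩ := h
  simp only [Matrix.mul_zero, Matrix.mul_one, Matrix.mul_neg, Matrix.zero_mul,
    Matrix.one_mul, Matrix.neg_mul, zero_add, add_zero] at h11 h12 h21 h22
  refine ⟨?_, ?_, ?_⟩
  · rw [← h11]; noncomm_ring
  · rw [← sub_eq_zero, ← h12]; noncomm_ring
  · rw [← h22]; noncomm_ring

/-! #### Lift as a reindexed block-diagonal matrix -/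

lemma LiftForm (G : Matrix (I2 d) (I2 d) ℝ) :
    Lift G = (fromBlocks 1 0 0 G).submatrix ⇑(eqv d) ⇑(eqv d) := by
  ext ((i|i)|(i|i)) ((j|j)|(j|j)) <;>
    simp [Lift, eqv, colOdd, colEven, fromBlocks, one_apply, Sum.inl.injEq, Sum.inr.injEq]

lemma LiftBlocks (G : Matrix (I2 d) (I2 d) ℝ) :
    Lift G = fromBlocks (Pm d + Km d * G * Nm d) (Km d * G * Qm d)
      (Qm d * G * Nm d) (Pm d + Qm d * G * Qm d) := by
  rw [← fromBlocks_toBlocks G, Lift]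
  have e11 : (fromBlocks G.toBlocks₁₁ G.toBlocks₁₂ G.toBlocks₂₁ G.toBlocks₂₂).submatrix
      Sum.inl Sum.inl = G.toBlocks₁₁ := by ext i j; rfl
  have e12 : (fromBlocks G.toBlocks₁₁ G.toBlocks₁₂ G.toBlocks₂₁ G.toBlocks₂₂).submatrix
      Sum.inl Sum.inr = G.toBlocks₁₂ := by ext i j; rfl
  have e21 : (fromBlocks G.toBlocks₁₁ G.toBlocks₁₂ G.toBlocks₂₁ G.toBlocks₂₂).submatrix
      Sum.inr Sum.inl = G.toBlocks₂₁ := by ext i j; rfl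
  have e22 : (fromBlocks G.toBlocks₁₁ G.toBlocks₁₂ G.toBlocks₂₁ G.toBlocks₂₂).submatrix
      Sum.inr Sum.inr = G.toBlocks₂₂ := by ext i j; rfl
  rw [e11, e12, e21, e22, Pm, Km, Nm, Qm]
  simp [fromBlocks_multiply, fromBlocks_add]

end SIF

open SIF in
/-- Every shift-invertible symplectic matrix `𝒜` factors as
`𝒜 = 𝒟_{E_𝒜⁻¹} · V_{M_𝒜} · V_Lᵀ · Lift(G_𝒜)` with `G_𝒜 = L·E_𝒜⁻¹·ℰ_𝒜`,
a product of four symplectic matrices. -/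
theorem shift_invertible_factorization (d : ℕ) (𝒜 : Matrix (I4 d) (I4 d) ℝ)
    (h𝒜 : IsSymplectic 𝒜) (hE : IsUnit (subE 𝒜)) :
    𝒜 = Dmat (subE 𝒜)⁻¹ * Vmat (Mmat 𝒜) * (Vmat (Lmat d))ᵀ *
          Lift (Lmat d * (subE 𝒜)⁻¹ * subEE 𝒜) ∧
    IsSymplectic (Dmat (subE 𝒜)⁻¹) ∧
    IsSymplectic (Vmat (Mmat 𝒜)) ∧
    IsSymplectic ((Vmat (Lmat d))ᵀ) ∧
    IsSymplectic (Lift (Lmat d * (subE 𝒜)⁻¹ * subEE 𝒜)) := by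
  have hdet : IsUnit (subE 𝒜).det := (Matrix.isUnit_iff_isUnit_det _).mp hE
  have hEEi : subE 𝒜 * (subE 𝒜)⁻¹ = 1 := Matrix.mul_nonsing_inv _ hdet
  have hEiE : (subE 𝒜)⁻¹ * subE 𝒜 = 1 := Matrix.nonsing_inv_mul _ hdet
  have hETi : ((subE 𝒜)⁻¹)ᵀ * (subE 𝒜)ᵀ = 1 := by
    rw [← transpose_mul, hEEi, transpose_one]
  obtain ⟨hR1, hR2, hR3⟩ := rels 𝒜 h𝒜
  have hR2' : (subEE 𝒜)ᵀ * subF 𝒜 = (subFF 𝒜)ᵀ * subE 𝒜 := by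
    have := congrArg Matrix.transpose hR2
    rw [transpose_mul, transpose_mul, transpose_transpose, transpose_transpose] at this
    exact this.symm
  -- d-level blocks of E and F
  have hEb : subE 𝒜 = fromBlocks (blk 𝒜 (r1 d) (r1 d)) (blk 𝒜 (r1 d) (r3 d))
      (blk 𝒜 (r2 d) (r1 d)) (blk 𝒜 (r2 d) (r3 d)) := by
    ext (i|i) (j|j) <;> rfl
  have hFb : subF 𝒜 = fromBlocks (blk 𝒜 (r3 d) (r1 d)) (blk 𝒜 (r3 d) (r3 d))
      (blk 𝒜 (r4 d) (r1 d)) (blk 𝒜 (r4 d) (r3 d)) := by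
    ext (i|i) (j|j) <;> rfl
  -- M = Eᵀ F - N
  have hMdef : Mmat 𝒜 = (subE 𝒜)ᵀ * subF 𝒜 - Nm d := by
    have h12 : (blk 𝒜 (r1 d) (r1 d))ᵀ * blk 𝒜 (r3 d) (r3 d)
        + (blk 𝒜 (r2 d) (r1 d))ᵀ * blk 𝒜 (r4 d) (r3 d)
        - ((blk 𝒜 (r3 d) (r1 d))ᵀ * blk 𝒜 (r1 d) (r3 d)
        + (blk 𝒜 (r4 d) (r1 d))ᵀ * blk 𝒜 (r2 d) (r3 d)) = 1 := by
      have h := hR1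
      rw [hEb, hFb] at h
      simp only [fromBlocks_transpose, fromBlocks_multiply, symplJ] at h
      rw [fb_sub, fromBlocks_inj] at h
      exact h.2.1
    rw [Mmat, hEb, hFb]
    simp only [fromBlocks_transpose, fromBlocks_multiply, Nm]
    rw [fb_sub, fromBlocks_inj]
    refine ⟨by abel, ?_, by abel, by abel⟩
    rw [← h12]; abel
  -- remaining d-level blocks
  have hEEb : subEE 𝒜 = fromBlocks (blk 𝒜 (r1 d) (r2 d)) (blk 𝒜 (r1 d) (r4 d))
      (blk 𝒜 (r2 d) (r2 d)) (blk 𝒜 (r2 d) (r4 d)) := by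
    ext (i|i) (j|j) <;> rfl
  have hFFb : subFF 𝒜 = fromBlocks (blk 𝒜 (r3 d) (r2 d)) (blk 𝒜 (r3 d) (r4 d))
      (blk 𝒜 (r4 d) (r2 d)) (blk 𝒜 (r4 d) (r4 d)) := by
    ext (i|i) (j|j) <;> rfl
  -- 𝒜 decomposed along its native 2d-blocks, in terms of E, ℰ, F, ℱ
  have hAblock : 𝒜 = fromBlocks
      (subE 𝒜 * Pm d + subEE 𝒜 * Nm d) (subE 𝒜 * Km d + subEE 𝒜 * Qm d)
      (subF 𝒜 * Pm d + subFF 𝒜 * Nm d) (subF 𝒜 * Km d + subFF 𝒜 * Qm d) := by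
    have hA4 : 𝒜 = fromBlocks
        (fromBlocks (blk 𝒜 (r1 d) (r1 d)) (blk 𝒜 (r1 d) (r2 d))
          (blk 𝒜 (r2 d) (r1 d)) (blk 𝒜 (r2 d) (r2 d)))
        (fromBlocks (blk 𝒜 (r1 d) (r3 d)) (blk 𝒜 (r1 d) (r4 d))
          (blk 𝒜 (r2 d) (r3 d)) (blk 𝒜 (r2 d) (r4 d)))
        (fromBlocks (blk 𝒜 (r3 d) (r1 d)) (blk 𝒜 (r3 d) (r2 d))
          (blk 𝒜 (r4 d) (r1 d)) (blk 𝒜 (r4 d) (r2 d)))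
        (fromBlocks (blk 𝒜 (r3 d) (r3 d)) (blk 𝒜 (r3 d) (r4 d))
          (blk 𝒜 (r4 d) (r3 d)) (blk 𝒜 (r4 d) (r4 d))) := by
      ext ((i|i)|(i|i)) ((j|j)|(j|j)) <;> rfl
    rw [hEb, hEEb, hFb, hFFb, Pm, Nm, Km, Qm]
    simp only [fromBlocks_multiply, fromBlocks_add, Matrix.mul_zero, Matrix.mul_one,
      Matrix.zero_mul, Matrix.one_mul, add_zero, zero_add]
    exact hA4
  have hXform : Dmat (subE 𝒜)⁻¹ * Vmat (Mmat 𝒜) * (Vmat (Lmat d))ᵀ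
      = fromBlocks (subE 𝒜) (subE 𝒜 * Lmat d) (((subE 𝒜)⁻¹)ᵀ * Mmat 𝒜)
          (((subE 𝒜)⁻¹)ᵀ * Mmat 𝒜 * Lmat d + ((subE 𝒜)⁻¹)ᵀ) := by
    rw [Dmat, Vmat, Vmat, fromBlocks_transpose, hLT, Matrix.nonsing_inv_nonsing_inv _ hdet,
      transpose_one, transpose_zero]
    simp only [fromBlocks_multiply, Matrix.mul_zero, Matrix.mul_one, Matrix.zero_mul,
      Matrix.one_mul, add_zero, zero_add]
  have hGsymp : (Lmat d * (subE 𝒜)⁻¹ * subEE 𝒜)ᵀ * symplJ (Fin d) *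
      (Lmat d * (subE 𝒜)⁻¹ * subEE 𝒜) = symplJ (Fin d) := by
    rw [transpose_mul, transpose_mul, hLT]
    rw [show (subEE 𝒜)ᵀ * ((subE 𝒜)⁻¹ᵀ * Lmat d) = (subEE 𝒜)ᵀ * (subE 𝒜)⁻¹ᵀ * Lmat d from
      (mul_assoc _ _ _).symm]
    exact hT6 hEEi hETi hLN hLK hPL hQL hJNK rfl hR1 hR2 hR2' hR3
  have hinv : (⇑(eqv d) ∘ ⇑(eqv d)) = id := by
    funext x; rcases x with (i|i)|(i|i) <;> rfl
  have hJ2 : symplJ (I2 d)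
      = (fromBlocks (symplJ (Fin d)) 0 0 (symplJ (Fin d))).submatrix ⇑(eqv d) ⇑(eqv d) := by
    rw [← Jform, submatrix_submatrix, hinv, submatrix_id_id]
  refine ⟨?_, ?_, ?_, ?_, ?_⟩
  · -- the factorization
    rw [hXform, LiftBlocks, fromBlocks_multiply]
    conv_lhs => rw [hAblock]
    rw [fromBlocks_inj]
    exact ⟨(hT1 hEEi hLL hLQ hKN rfl).symm, (hT2 hEEi hLL hLQ hLP hKN rfl).symm,
      (hT3 hEEi hETi hLL hLQ hPL hQL hNK hNP hNN hKN hJNK rfl hMdef hR1 hR2).symm,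
      (hT4 hEEi hETi hLL hLQ hLP hPL hQL hNK hNN hKN hJNK rfl hMdef hR1 hR2).symm⟩
  · -- Dmat is symplectic
    rw [IsSymplectic, symplJ, Dmat, Matrix.nonsing_inv_nonsing_inv _ hdet,
      fromBlocks_transpose]
    simp only [fromBlocks_multiply, Matrix.mul_zero, Matrix.mul_one, Matrix.zero_mul,
      Matrix.one_mul, Matrix.mul_neg, Matrix.neg_mul, add_zero, zero_add, transpose_zero,
      transpose_transpose]
    rw [fromBlocks_inj]
    refine ⟨by simp, ?_, ?_, by simp⟩
    · rw [← transpose_mul, hEiE, transpose_one]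
    · rw [hEiE]
  · -- Vmat (Mmat 𝒜) is symplectic
    have hMsym : (Mmat 𝒜)ᵀ = Mmat 𝒜 := by
      rw [hMdef, transpose_sub, transpose_mul, transpose_transpose, hNT]
      have hFE : (subF 𝒜)ᵀ * subE 𝒜 = (subE 𝒜)ᵀ * subF 𝒜 - symplJ (Fin d) := by
        rw [← hR1]; abel
      rw [hFE, hJNK]; abel
    rw [IsSymplectic, symplJ, Vmat, fromBlocks_transpose, transpose_one, transpose_zero]
    simp only [fromBlocks_multiply, Matrix.mul_zero, Matrix.mul_one, Matrix.zero_mul,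
      Matrix.one_mul, Matrix.mul_neg, Matrix.neg_mul, add_zero, zero_add]
    rw [fromBlocks_inj]
    refine ⟨?_, by simp, by simp, by simp⟩
    rw [hMsym]; abel
  · -- (Vmat (Lmat d))ᵀ is symplectic
    rw [IsSymplectic, transpose_transpose, symplJ, Vmat, fromBlocks_transpose, transpose_one,
      transpose_zero, hLT]
    simp only [fromBlocks_multiply, Matrix.mul_zero, Matrix.mul_one, Matrix.zero_mul,
      Matrix.one_mul, Matrix.mul_neg, Matrix.neg_mul, add_zero, zero_add]
    rw [fromBlocks_inj]
    exact ⟨by simp, by simp, by simp, by simp [hLT]⟩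
  · -- Lift is symplectic
    rw [IsSymplectic, LiftForm, transpose_submatrix, hJ2, submatrix_mul_equiv,
      submatrix_mul_equiv]
    rw [fromBlocks_transpose, transpose_one, transpose_zero]
    simp only [fromBlocks_multiply, Matrix.mul_zero, Matrix.mul_one, Matrix.zero_mul,
      Matrix.one_mul, add_zero, zero_add]
    rw [hGsymp]
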